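/- The function s ↦ ρ_s := ∫₀^∞ du/(1 + u^s) is strictly decreasing on (1, ∞): for all 1 < s₁ < s₂, ρ_{s₂} < ρ_{s₁}. -/

import Mathlib

open MeasureTheory

open Set Real in
private lemma rho_contOn (s : ℝ) :
    ContinuousOn (fun x : ℝ => 1 / (1 + x ^ s)) (Set.Ioi 1) := by
  apply ContinuousOn.div continuousOn_const
  · exact continuousOn_const.add (fun x hx => (Real.continuousAt_rpow_const x s
      (Or.inl (ne_of_gt (lt_trans one_pos (Set.mem_Ioi.1 hx))))).continuousWithinAt)
  · intro x hx
    have hx0 : (0:ℝ) < x := lt_trans one_pos hx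
    positivity

open Set Real in
private lemma rho_pow_contOn (s t : ℝ) :
    ContinuousOn (fun x : ℝ => x ^ t / (1 + x ^ s)) (Set.Ioi 1) := by
  apply ContinuousOn.div
  · exact fun x hx => (Real.continuousAt_rpow_const x t
      (Or.inl (ne_of_gt (lt_trans one_pos (Set.mem_Ioi.1 hx))))).continuousWithinAt
  · exact continuousOn_const.add (fun x hx => (Real.continuousAt_rpow_const x s
      (Or.inl (ne_of_gt (lt_trans one_pos (Set.mem_Ioi.1 hx))))).continuousWithinAt)
  · intro x hx
    have hx0 : (0:ℝ) < x := lt_trans one_pos hx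
    positivity

open Set Real in
private lemma rho_int1 (s : ℝ) (hs : 1 < s) :
    IntegrableOn (fun x : ℝ => 1 / (1 + x ^ s)) (Set.Ioi 1) := by
  have hint : IntegrableOn (fun x : ℝ => x ^ (-s)) (Set.Ioi 1) :=
    integrableOn_Ioi_rpow_of_lt (by linarith) one_pos
  refine hint.integrable.mono'
    ((rho_contOn s).aestronglyMeasurable measurableSet_Ioi) ?_
  filter_upwards [ae_restrict_mem measurableSet_Ioi] with x hx
  have hx0 : (0:ℝ) < x := lt_trans one_pos hx
  have hxs : (0:ℝ) < x ^ s := Real.rpow_pos_of_pos hx0 s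
  rw [Real.norm_eq_abs, abs_of_nonneg (by positivity), Real.rpow_neg hx0.le]
  rw [one_div, inv_le_inv₀ (by positivity) hxs]
  linarith

open Set Real in
private lemma rho_int2 (s : ℝ) (hs : 1 < s) :
    IntegrableOn (fun x : ℝ => x ^ (s - 2) / (1 + x ^ s)) (Set.Ioi 1) := by
  have hint : IntegrableOn (fun x : ℝ => x ^ (-2 : ℝ)) (Set.Ioi 1) :=
    integrableOn_Ioi_rpow_of_lt (by norm_num) one_pos
  refine hint.integrable.mono'
    ((rho_pow_contOn s (s - 2)).aestronglyMeasurable measurableSet_Ioi) ?_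
  filter_upwards [ae_restrict_mem measurableSet_Ioi] with x hx
  have hx0 : (0:ℝ) < x := lt_trans one_pos hx
  have hxs : (0:ℝ) < x ^ s := Real.rpow_pos_of_pos hx0 s
  have hxs2 : (0:ℝ) < x ^ (s - 2) := Real.rpow_pos_of_pos hx0 _
  rw [Real.norm_eq_abs, abs_of_nonneg (by positivity)]
  have h1 : x ^ (s - 2) / (1 + x ^ s) ≤ x ^ (s - 2) / x ^ s := by
    apply div_le_div_of_nonneg_left hxs2.le hxs
    linarith
  have h2 : x ^ (s - 2) / x ^ s = x ^ (-2 : ℝ) := by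
    rw [← Real.rpow_sub hx0]; ring_nf
  linarith [h1, h2.le]

open Set Real in
/-- Change of variables `u ↦ u⁻¹` on `(0,1]`. -/
private lemma rho_half (s : ℝ) : ∫ u in Set.Ioc (0:ℝ) 1, 1 / (1 + u ^ s)
    = ∫ x in Set.Ioi (1:ℝ), x ^ (s - 2) / (1 + x ^ s) := by
  have himg : (fun x : ℝ => x⁻¹) '' Set.Ioi 1 = Set.Ioo 0 1 := by
    ext y
    constructor
    · rintro ⟨x, hx, rfl⟩
      have hx1 : (1:ℝ) < x := Set.mem_Ioi.1 hx
      have hx0 : (0:ℝ) < x := lt_trans one_pos hx1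
      exact ⟨by positivity, inv_lt_one_of_one_lt₀ hx1⟩
    · rintro ⟨hy0, hy1⟩
      exact ⟨y⁻¹, Set.mem_Ioi.2 (one_lt_inv_iff₀.2 ⟨hy0, hy1⟩), inv_inv y⟩
  have hderiv : ∀ x ∈ Set.Ioi (1:ℝ),
      HasDerivWithinAt (fun x : ℝ => x⁻¹) (-(x^2)⁻¹) (Set.Ioi 1) x := fun x hx =>
    (hasDerivAt_inv (ne_of_gt (lt_trans one_pos (Set.mem_Ioi.1 hx)))).hasDerivWithinAt
  have hinj : Set.InjOn (fun x : ℝ => x⁻¹) (Set.Ioi 1) := inv_injective.injOn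
  have key := integral_image_eq_integral_abs_deriv_smul measurableSet_Ioi hderiv hinj
    (fun u => 1 / (1 + u ^ s))
  rw [himg] at key
  rw [integral_Ioc_eq_integral_Ioo, key]
  apply setIntegral_congr_fun measurableSet_Ioi
  intro x hx
  have hx0 : (0:ℝ) < x := lt_trans one_pos hx
  have hxs : (0:ℝ) < x ^ s := Real.rpow_pos_of_pos hx0 s
  have hx2 : (0:ℝ) < x ^ 2 := by positivity
  have hinv : (x⁻¹ : ℝ) ^ s = (x ^ s)⁻¹ := Real.inv_rpow hx0.le s
  have hsub : x ^ (s - 2) = x ^ s / x ^ 2 := by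
    rw [Real.rpow_sub hx0, Real.rpow_two]
  simp only [smul_eq_mul, abs_neg, abs_inv, abs_of_pos hx2, hinv, hsub]
  rw [eq_div_iff (by positivity)]
  field_simp
  ring

open Set Real in
/-- Representation of `ρ_s` as an integral over `(1, ∞)`. -/
private lemma rho_rep (s : ℝ) (hs : 1 < s) : ∫ u in Set.Ioi (0:ℝ), 1 / (1 + u ^ s)
    = ∫ x in Set.Ioi (1:ℝ), (1 + x ^ (s - 2)) / (1 + x ^ s) := by
  have hunion : Set.Ioc (0:ℝ) 1 ∪ Set.Ioi 1 = Set.Ioi 0 :=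
    Set.Ioc_union_Ioi_eq_Ioi zero_le_one
  have hIoc : IntegrableOn (fun u : ℝ => 1 / (1 + u ^ s)) (Set.Ioc 0 1) := by
    have hconst : IntegrableOn (fun _ : ℝ => (1:ℝ)) (Set.Ioc 0 1) :=
      integrableOn_const (by rw [Real.volume_Ioc]; norm_num)
    refine hconst.integrable.mono' ?_ ?_
    · apply ContinuousOn.aestronglyMeasurable ?_ measurableSet_Ioc
      apply ContinuousOn.div continuousOn_const
      · exact continuousOn_const.add (fun x hx =>
          (Real.continuousAt_rpow_const x s (Or.inl (by exact ne_of_gt hx.1))).continuousWithinAt)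
      · intro x hx
        have := Real.rpow_pos_of_pos hx.1 s
        positivity
    · filter_upwards [ae_restrict_mem measurableSet_Ioc] with x hx
      have hxs : (0:ℝ) < x ^ s := Real.rpow_pos_of_pos hx.1 s
      rw [Real.norm_eq_abs, abs_of_nonneg (by positivity)]
      rw [div_le_one (by positivity)]
      linarith
  rw [← hunion, setIntegral_union (Set.Ioc_disjoint_Ioi le_rfl) measurableSet_Ioi hIoc
    (rho_int1 s hs), rho_half s, ← integral_add (rho_int2 s hs) (rho_int1 s hs)]
  apply setIntegral_congr_fun measurableSet_Ioi
  intro x hx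
  dsimp only
  rw [add_div, add_comm]

/-- The map `s ↦ ρ_s = ∫₀^∞ du/(1 + u ^ s)` is strictly decreasing on `(1, ∞)`. -/
theorem rho_strictAnti
    (s₁ s₂ : ℝ) (hs₁ : 1 < s₁) (hs : s₁ < s₂) :
    ∫ u in Set.Ioi (0 : ℝ), 1 / (1 + u ^ s₂) <
      ∫ u in Set.Ioi (0 : ℝ), 1 / (1 + u ^ s₁) := by
  have hs₂ : 1 < s₂ := lt_trans hs₁ hs
  rw [rho_rep s₁ hs₁, rho_rep s₂ hs₂]
  set f₁ : ℝ → ℝ := fun x => (1 + x ^ (s₁ - 2)) / (1 + x ^ s₁) with hf₁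
  set f₂ : ℝ → ℝ := fun x => (1 + x ^ (s₂ - 2)) / (1 + x ^ s₂) with hf₂
  have hint : ∀ s : ℝ, 1 < s → IntegrableOn
      (fun x : ℝ => (1 + x ^ (s - 2)) / (1 + x ^ s)) (Set.Ioi 1) := by
    intro s hs
    have h : IntegrableOn (fun x : ℝ => 1 / (1 + x ^ s) + x ^ (s - 2) / (1 + x ^ s))
        (Set.Ioi 1) := (rho_int1 s hs).add (rho_int2 s hs)
    apply IntegrableOn.congr_fun h ?_ measurableSet_Ioi
    intro x hx
    dsimp only
    rw [add_div, add_comm]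
  have hi₁ : IntegrableOn f₁ (Set.Ioi 1) := hint s₁ hs₁
  have hi₂ : IntegrableOn f₂ (Set.Ioi 1) := hint s₂ hs₂
  have hpt : ∀ x ∈ Set.Ioi (1:ℝ), f₂ x < f₁ x := by
    intro x hx
    rw [Set.mem_Ioi] at hx
    have hx0 : (0:ℝ) < x := lt_trans one_pos hx
    have hab : x ^ s₁ < x ^ s₂ := Real.rpow_lt_rpow_left_iff hx |>.2 hs
    have ha : (0:ℝ) < x ^ s₁ := Real.rpow_pos_of_pos hx0 _
    have hc0 : (0:ℝ) < x ^ (-2 : ℝ) := Real.rpow_pos_of_pos hx0 _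
    have hc1 : x ^ (-2 : ℝ) < 1 := Real.rpow_lt_one_of_one_lt_of_neg hx (by norm_num)
    have h1 : x ^ (s₁ - 2) = x ^ s₁ * x ^ (-2 : ℝ) := by
      rw [← Real.rpow_add hx0]; ring_nf
    have h2 : x ^ (s₂ - 2) = x ^ s₂ * x ^ (-2 : ℝ) := by
      rw [← Real.rpow_add hx0]; ring_nf
    rw [hf₁, hf₂]
    simp only [h1, h2]
    rw [div_lt_div_iff₀ (by linarith) (by linarith)]
    nlinarith [mul_pos (sub_pos.2 hab) (sub_pos.2 hc1)]
  have hsub : 0 < ∫ x in Set.Ioi (1:ℝ), (f₁ x - f₂ x) := by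
    rw [setIntegral_pos_iff_support_of_nonneg_ae]
    · refine lt_of_lt_of_le ?_ (measure_mono (show Set.Ioi (1:ℝ) ⊆
        Function.support (fun x => f₁ x - f₂ x) ∩ Set.Ioi 1 from fun x hx =>
        ⟨ne_of_gt (sub_pos.2 (hpt x hx)), hx⟩))
      rw [Real.volume_Ioi]
      exact ENNReal.zero_lt_top
    · rw [Filter.EventuallyLE, ae_restrict_iff' measurableSet_Ioi]
      filter_upwards with x hx
      simp only [Pi.zero_apply]
      exact sub_nonneg.2 (hpt x hx).le
    · exact hi₁.sub hi₂
  rw [integral_sub hi₁ hi₂] at hsub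
  linarith
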